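/- Limits imply components: Let Γ^∨ be a join-closed move semigroup. Suppose γ|_D is the limit (with respect to fixed domain D, i.e., γ^i → γ and γ^i|_D ∈ Γ^∨) of a sequence of moves γ^i|_{D^i} in Γ^∨ with γ^i ≠ γ for every i, and let I = γ(D). Then: (1) if γ is a translation, tMoves((D ∪ I) × (D ∪ I)) ⊆ join(lim(Γ^∨)); (2) if γ is a reflection, rMoves((D × I) ∪ (I × D)) ⊆ join(lim(Γ^∨)) and tMoves((D × D) ∪ (I × I)) ⊆ join(lim(Γ^∨)). -/

import Mathlib

open Filter Set

noncomputable section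

/-- The unrestricted translation (`b = false`) or reflection (`b = true`)
with parameter `p`: `x ↦ x + p`, resp. `x ↦ p - x`. -/
def uEval (b : Bool) (p : ℝ) (x : ℝ) : ℝ := if b then p - x else x + p

/-- A restricted move `γ|_D`: a translation (`isRefl = false`) or a
reflection (`isRefl = true`) together with a domain. -/
structure Move where
  isRefl : Bool
  param : ℝ
  dom : Set ℝ

namespace Move

def eval (m : Move) : ℝ → ℝ := uEval m.isRefl m.param

/-- The character: `+1` for translations, `-1` for reflections. -/
def chi (m : Move) : ℝ := if m.isRefl then -1 else 1

def image (m : Move) : Set ℝ := m.eval '' m.dom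

def graph (m : Move) : Set (ℝ × ℝ) := (fun x => (x, m.eval x)) '' m.dom

/-- Domains of moves must be open intervals or empty. -/
def ValidDom (D : Set ℝ) : Prop := IsOpen D ∧ D.OrdConnected

/-- A valid move: open-interval-or-empty domain; moves with empty domain are
normalized (`param = 0`), so that there are exactly two empty moves, one of
each character. -/
def Valid (m : Move) : Prop := ValidDom m.dom ∧ (m.dom = ∅ → m.param = 0)

/-- The move `γ|_D` (normalized representative). -/
def mk' (b : Bool) (p : ℝ) (D : Set ℝ) : Move :=
  letI : Decidable (D = ∅) := Classical.dec _
  ⟨b, if D = ∅ then 0 else p, D⟩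

/-- Composition of moves: `γ₂|_{D₂} ∘ γ₁|_{D₁} = (γ₂ ∘ γ₁)|_{D₁ ∩ γ₁⁻¹ D₂}`. -/
def comp (m2 m1 : Move) : Move :=
  mk' (m2.isRefl != m1.isRefl)
    (if m2.isRefl then m2.param - m1.param else m1.param + m2.param)
    (m1.dom ∩ m1.eval ⁻¹' m2.dom)

/-- Inverse of a move: `(γ|_D)⁻¹ = γ⁻¹|_{γ(D)}`. -/
def inv (m : Move) : Move :=
  mk' m.isRefl (if m.isRefl then m.param else -m.param) (m.eval '' m.dom)

/-- The restriction partial order: `m1` is a restriction of `m2`. -/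
def le (m1 m2 : Move) : Prop :=
  m1.isRefl = m2.isRefl ∧ m1.dom ⊆ m2.dom ∧ ∀ x ∈ m1.dom, m1.eval x = m2.eval x

end Move

/-- A move ensemble: a set of (valid) moves. -/
def IsMoveEnsemble (Ω : Set Move) : Prop := ∀ m ∈ Ω, m.Valid

/-- A move semigroup: a move ensemble closed under composition and inverse. -/
def IsMoveSemigroup (Γ : Set Move) : Prop :=
  IsMoveEnsemble Γ ∧ (∀ m1 ∈ Γ, ∀ m2 ∈ Γ, Move.comp m2 m1 ∈ Γ) ∧
    (∀ m ∈ Γ, Move.inv m ∈ Γ)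

/-- `⟨Ω⟩`: the smallest move semigroup containing `Ω`. -/
def semi (Ω : Set Move) : Set Move := ⋂₀ {Γ | IsMoveSemigroup Γ ∧ Ω ⊆ Γ}

/-- Axiom (restrict). -/
def RestrictClosed (Ω : Set Move) : Prop :=
  ∀ m ∈ Ω, ∀ D' : Set ℝ, D' ⊆ m.dom → Move.ValidDom D' →
    Move.mk' m.isRefl m.param D' ∈ Ω

/-- The restriction closure of an ensemble. -/
def restrictCl (Ω : Set Move) : Set Move := ⋂₀ {Γ | RestrictClosed Γ ∧ Ω ⊆ Γ}

/-- Join-closed: restriction-closed and closed under continuation (joins). -/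
def JoinClosed (Ω : Set Move) : Prop :=
  RestrictClosed Ω ∧
    ∀ (b : Bool) (p : ℝ) (J : Set (Set ℝ)), J.Nonempty →
      (∀ I ∈ J, Move.mk' b p I ∈ Ω) → (⋃₀ J).OrdConnected →
      Move.mk' b p (⋃₀ J) ∈ Ω

/-- `join(Ω)`: the smallest join-closed ensemble containing `Ω`. -/
def joinCl (Ω : Set Move) : Set Move := ⋂₀ {Γ | JoinClosed Γ ∧ Ω ⊆ Γ}

/-- `joinsemi(Ω) = join(⟨Ω⟩)`: the joined move semigroup generated by `Ω`. -/
def joinsemi (Ω : Set Move) : Set Move := joinCl (semi Ω)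

/-- `θ` respects the move `γ|_D`: `θ(γ(x)) = χ(γ)·θ(x) + c` on `D`. -/
def Respects (θ : ℝ → ℝ) (m : Move) : Prop :=
  ∃ c : ℝ, ∀ x ∈ m.dom, θ (m.eval x) = m.chi * θ x + c

/-- `θ` respects each move of the ensemble `Ω`. -/
def RespectsAll (θ : ℝ → ℝ) (Ω : Set Move) : Prop := ∀ m ∈ Ω, Respects θ m

/-- All translation moves with graph contained in `O`. -/
def tMoves (O : Set (ℝ × ℝ)) : Set Move :=
  {m | m.isRefl = false ∧ m.Valid ∧ m.graph ⊆ O}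

/-- All reflection moves with graph contained in `O`. -/
def rMoves (O : Set (ℝ × ℝ)) : Set Move :=
  {m | m.isRefl = true ∧ m.Valid ∧ m.graph ⊆ O}

/-- All moves with graph contained in `O`. -/
def movesIn (O : Set (ℝ × ℝ)) : Set Move := {m | m.Valid ∧ m.graph ⊆ O}

/-- Translation moves graph of an ensemble. -/
def grPlus (Ω : Set Move) : Set (ℝ × ℝ) :=
  {q | ∃ m ∈ Ω, m.isRefl = false ∧ q ∈ m.graph}

/-- Reflection moves graph of an ensemble. -/
def grMinus (Ω : Set Move) : Set (ℝ × ℝ) :=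
  {q | ∃ m ∈ Ω, m.isRefl = true ∧ q ∈ m.graph}

/-- `dom(O)`: union of the domains of the moves in `movesIn O`. -/
def domOf (O : Set (ℝ × ℝ)) : Set ℝ := {x | ∃ m ∈ movesIn O, x ∈ m.dom}

/-- `im(O)`: union of the images of the moves in `movesIn O`. -/
def imOf (O : Set (ℝ × ℝ)) : Set ℝ := {x | ∃ m ∈ movesIn O, x ∈ m.image}

/-- domain of a move ensemble. -/
def domEns (Ω : Set Move) : Set ℝ := {x | ∃ m ∈ Ω, x ∈ m.dom}

/-- image of a move ensemble. -/
def imEns (Ω : Set Move) : Set ℝ := {x | ∃ m ∈ Ω, x ∈ m.image}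

/-- Convergence of a sequence of unrestricted moves (character, parameter):
all but finitely many have character `b`, and the parameters tend to `p`. -/
def ConvergesTo (γ : ℕ → Bool × ℝ) (b : Bool) (p : ℝ) : Prop :=
  (∀ᶠ i in atTop, (γ i).1 = b) ∧ Tendsto (fun i => (γ i).2) atTop (nhds p)

/-- Axiom (lim): fixed-domain limits of moves. -/
def LimClosed (Ω : Set Move) : Prop :=
  ∀ D : Set ℝ, Move.ValidDom D →
    ∀ (γ : ℕ → Bool × ℝ) (b : Bool) (p : ℝ), ConvergesTo γ b p →
      (∀ i, Move.mk' (γ i).1 (γ i).2 D ∈ Ω) → Move.mk' b p D ∈ Ω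

/-- `lim(Ω)`: the smallest superset of `Ω` satisfying (lim). -/
def limCl (Ω : Set Move) : Set Move := ⋂₀ {Γ | LimClosed Γ ∧ Ω ⊆ Γ}

/-- Axiom (arblim): limits of moves with converging domains. -/
def ArbLimClosed (Ω : Set Move) : Prop :=
  ∀ (γ : ℕ → Bool × ℝ) (b : Bool) (p : ℝ) (l u : ℕ → ℝ) (l₀ u₀ : ℝ),
    ConvergesTo γ b p → Tendsto l atTop (nhds l₀) → Tendsto u atTop (nhds u₀) →
    (∀ i, Move.mk' (γ i).1 (γ i).2 (Set.Ioo (l i) (u i)) ∈ Ω) →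
    Move.mk' b p (Set.Ioo l₀ u₀) ∈ Ω

/-- `arblim(Ω)`: the smallest superset of `Ω` satisfying (arblim). -/
def arblimCl (Ω : Set Move) : Set Move := ⋂₀ {Γ | ArbLimClosed Γ ∧ Ω ⊆ Γ}

/-- Axiom (kaleido). -/
def Kaleidoscopic (Ω : Set Move) : Prop :=
  ∀ D I : Set ℝ, Move.ValidDom D → Move.ValidDom I →
    (tMoves (D ×ˢ I) ⊆ Ω ↔ rMoves (D ×ˢ I) ⊆ Ω)

/-- Axiom (extend_A): continuous domain extension relative to the open set `A`. -/
def ExtendClosed (A : Set ℝ) (Ω : Set Move) : Prop :=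
  ∀ (b : Bool) (p : ℝ) (J : Set (Set ℝ)) (D : Set ℝ), J.Nonempty →
    (∀ I ∈ J, Move.mk' b p I ∈ Ω) → Move.ValidDom D →
    D ⊆ closure (⋃₀ J) ∩ A ∩ uEval b p ⁻¹' A →
    Move.mk' b p D ∈ Ω

/-- `joinextend_A(Ω)`: the smallest superset of `Ω` satisfying (extend_A). -/
def joinExtendCl (A : Set ℝ) (Ω : Set Move) : Set Move :=
  ⋂₀ {Γ | ExtendClosed A Γ ∧ Ω ⊆ Γ}

/-- A closed move semigroup with respect to the open set `A`. -/
def ClosedMoveSemigroup (A : Set ℝ) (Γ : Set Move) : Prop :=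
  IsMoveSemigroup Γ ∧ JoinClosed Γ ∧ Kaleidoscopic Γ ∧ LimClosed Γ ∧
    ExtendClosed A Γ

/-- The moves closure `ctscl(Ω)`: the smallest closed move semigroup
(with respect to `A`) containing `Ω`. -/
def ctscl (A : Set ℝ) (Ω : Set Move) : Set Move :=
  ⋂₀ {Γ | ClosedMoveSemigroup A Γ ∧ Ω ⊆ Γ}

/-- The set of maximal elements of `Ω` in the restriction partial order. -/
def MaxOf (Ω : Set Move) : Set Move :=
  {m ∈ Ω | ∀ m' ∈ Ω, Move.le m m' → Move.le m' m}

section Aux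

lemma mk'_of_ne {b : Bool} {p : ℝ} {D : Set ℝ} (h : D ≠ ∅) :
    Move.mk' b p D = ⟨b, p, D⟩ := by
  simp [Move.mk', h]

lemma mk'_empty (b : Bool) (p : ℝ) : Move.mk' b p (∅ : Set ℝ) = ⟨b, 0, ∅⟩ := by
  simp [Move.mk']

lemma mk'_isRefl (b : Bool) (p : ℝ) (D : Set ℝ) : (Move.mk' b p D).isRefl = b := by
  simp [Move.mk']

lemma mk'_dom (b : Bool) (p : ℝ) (D : Set ℝ) : (Move.mk' b p D).dom = D := by
  simp [Move.mk']

lemma mk'_param_of_ne (b : Bool) (q : ℝ) {Dd : Set ℝ} (h : Dd ≠ ∅) :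
    (Move.mk' b q Dd).param = q := by
  simp [Move.mk', h]

lemma validDom_empty : Move.ValidDom (∅ : Set ℝ) := ⟨isOpen_empty, Set.ordConnected_empty⟩

lemma validDom_Ioo (a b : ℝ) : Move.ValidDom (Set.Ioo a b) := ⟨isOpen_Ioo, Set.ordConnected_Ioo⟩

lemma validDom_inter {A B : Set ℝ} (hA : Move.ValidDom A) (hB : Move.ValidDom B) :
    Move.ValidDom (A ∩ B) := ⟨hA.1.inter hB.1, hA.2.inter hB.2⟩

lemma comp_isRefl (m1 m2 : Move) : (Move.comp m2 m1).isRefl = (m2.isRefl != m1.isRefl) := by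
  simp [Move.comp, mk'_isRefl]

lemma comp_dom (m1 m2 : Move) : (Move.comp m2 m1).dom = m1.dom ∩ m1.eval ⁻¹' m2.dom := by
  simp [Move.comp, mk'_dom]

lemma comp_param {m1 m2 : Move} (h : (Move.comp m2 m1).dom ≠ ∅) :
    (Move.comp m2 m1).param
      = if m2.isRefl then m2.param - m1.param else m1.param + m2.param := by
  rw [comp_dom] at h
  rw [Move.comp, mk'_param_of_ne _ _ h]

lemma inv_isRefl (m : Move) : (Move.inv m).isRefl = m.isRefl := by
  simp [Move.inv, mk'_isRefl]

lemma inv_dom (m : Move) : (Move.inv m).dom = m.eval '' m.dom := by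
  simp [Move.inv, mk'_dom]

lemma inv_param_of_ne {m : Move} (h : m.dom ≠ ∅) :
    (Move.inv m).param = if m.isRefl then m.param else -m.param := by
  rw [Move.inv, mk'_param_of_ne]
  simpa [Set.image_eq_empty] using h

lemma valid_mk'_eq {m : Move} (h : m.Valid) : Move.mk' m.isRefl m.param m.dom = m := by
  rcases eq_or_ne m.dom ∅ with he | hne
  · rw [he, mk'_empty, ← h.2 he, ← he]
  · rw [mk'_of_ne hne]

lemma subset_limCl (Γ : Set Move) : Γ ⊆ limCl Γ :=
  fun _ hm => Set.mem_sInter.mpr fun _ hΓ' => hΓ'.2 hm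

lemma limClosed_limCl (Γ : Set Move) : LimClosed (limCl Γ) := by
  intro D hD γ b p hc hm
  exact Set.mem_sInter.mpr fun Γ' hΓ' => hΓ'.1 D hD γ b p hc
    (fun i => Set.mem_sInter.mp (hm i) Γ' hΓ')

lemma subset_joinCl (Ω : Set Move) : Ω ⊆ joinCl Ω :=
  fun _ hm => Set.mem_sInter.mpr fun _ hΓ' => hΓ'.2 hm

lemma joinClosed_joinCl (Ω : Set Move) : JoinClosed (joinCl Ω) := by
  constructor
  · intro m hm D' hsub hval
    exact Set.mem_sInter.mpr fun Γ' hΓ' =>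
      hΓ'.1.1 m (Set.mem_sInter.mp hm Γ' hΓ') D' hsub hval
  · intro b p J hJ hmem hord
    exact Set.mem_sInter.mpr fun Γ' hΓ' =>
      hΓ'.1.2 b p J hJ (fun I hI => Set.mem_sInter.mp (hmem I hI) Γ' hΓ') hord

lemma mem_Ioo_abs {x η z : ℝ} (hz : z ∈ Set.Ioo (x - η) (x + η)) : |z - x| < η := by
  rw [abs_sub_lt_iff]
  exact ⟨by linarith [hz.2], by linarith [hz.1]⟩

lemma seg {D : Set ℝ} (hD : Move.ValidDom D) {u σ : ℝ} (hu : u ∈ D) (hv : u + σ ∈ D) :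
    ∃ η > 0, ∀ z, |z - u| < η → ∀ c ∈ Set.Icc (0:ℝ) 1, z + c * σ ∈ D := by
  obtain ⟨η₁, hη₁, h1⟩ := Metric.isOpen_iff.mp hD.1 u hu
  obtain ⟨η₂, hη₂, h2⟩ := Metric.isOpen_iff.mp hD.1 _ hv
  refine ⟨min η₁ η₂, lt_min hη₁ hη₂, fun z hz c hc => ?_⟩
  have hzw : |z + c * σ - (u + c * σ)| < min η₁ η₂ := by
    rw [show z + c * σ - (u + c * σ) = z - u by ring]; exact hz
  rcases le_total 0 σ with hσ | hσ
  · have hw1 : u ≤ u + c * σ := by nlinarith [hc.1, hc.2]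
    have hw2 : u + c * σ ≤ u + σ := by nlinarith [hc.1, hc.2]
    rcases le_total (z + c * σ) u with h | h
    · apply h1
      rw [Metric.mem_ball, Real.dist_eq]
      have habs : |z + c * σ - u| ≤ |z + c * σ - (u + c * σ)| := by
        rw [abs_of_nonpos (by linarith), abs_of_nonpos (by linarith)]; linarith
      exact lt_of_le_of_lt habs (lt_of_lt_of_le hzw (min_le_left _ _))
    · rcases le_total (u + σ) (z + c * σ) with h' | h'
      · apply h2
        rw [Metric.mem_ball, Real.dist_eq]
        have habs : |z + c * σ - (u + σ)| ≤ |z + c * σ - (u + c * σ)| := by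
          rw [abs_of_nonneg (by linarith), abs_of_nonneg (by linarith)]; linarith
        exact lt_of_le_of_lt habs (lt_of_lt_of_le hzw (min_le_right _ _))
      · exact hD.2.out hu hv ⟨h, h'⟩
  · have hw1 : u + σ ≤ u + c * σ := by nlinarith [hc.1, hc.2]
    have hw2 : u + c * σ ≤ u := by nlinarith [hc.1, hc.2]
    rcases le_total u (z + c * σ) with h | h
    · apply h1
      rw [Metric.mem_ball, Real.dist_eq]
      have habs : |z + c * σ - u| ≤ |z + c * σ - (u + c * σ)| := by
        rw [abs_of_nonneg (by linarith), abs_of_nonneg (by linarith)]; linarith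
      exact lt_of_le_of_lt habs (lt_of_lt_of_le hzw (min_le_left _ _))
    · rcases le_total (z + c * σ) (u + σ) with h' | h'
      · apply h2
        rw [Metric.mem_ball, Real.dist_eq]
        have habs : |z + c * σ - (u + σ)| ≤ |z + c * σ - (u + c * σ)| := by
          rw [abs_of_nonpos (by linarith), abs_of_nonpos (by linarith)]; linarith
        exact lt_of_le_of_lt habs (lt_of_lt_of_le hzw (min_le_right _ _))
      · exact hD.2.out hv hu ⟨h', h⟩

end Aux
def Pt (Γ : Set Move) (D : Set ℝ) (s : ℝ) : Prop :=
  ∀ E : Set ℝ, Move.ValidDom E → E ⊆ D → (∀ x ∈ E, x + s ∈ D) → Move.mk' false s E ∈ Γ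

section Engine

variable {Γ : Set Move} {D : Set ℝ} {b : Bool} {t : ℕ → ℝ} {p : ℝ}
variable (hsemi : IsMoveSemigroup Γ) (hjoin : JoinClosed Γ)
  (hD : Move.ValidDom D) (hDne : D.Nonempty)
  (htt : Filter.Tendsto t Filter.atTop (nhds p))
  (htm : ∀ n, (⟨b, t n, D⟩ : Move) ∈ Γ)
  (htne : ∀ n, t n ≠ p)

include hsemi hjoin in
lemma comp_restrict {m1 m2 : Move} (h1 : m1 ∈ Γ) (h2 : m2 ∈ Γ) {E : Set ℝ}
    (hE : Move.ValidDom E) (hsub : E ⊆ m1.dom) (hsub2 : ∀ x ∈ E, m1.eval x ∈ m2.dom) :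
    Move.mk' (m2.isRefl != m1.isRefl)
      (if m2.isRefl then m2.param - m1.param else m1.param + m2.param) E ∈ Γ := by
  have hc := hsemi.2.1 _ h1 _ h2
  have hsubd : E ⊆ (Move.comp m2 m1).dom := by
    rw [comp_dom]; exact fun x hx => ⟨hsub hx, hsub2 x hx⟩
  have hres := hjoin.1 _ hc E hsubd hE
  rcases eq_or_ne E ∅ with rfl | hEne
  · rw [mk'_empty] at hres ⊢
    rwa [comp_isRefl] at hres
  · have hdne : (Move.comp m2 m1).dom ≠ ∅ := fun h =>
      hEne (Set.subset_empty_iff.mp (h ▸ hsubd))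
    rwa [comp_isRefl, comp_param hdne] at hres

include hsemi hjoin htm in
lemma empty_tr_mem : (⟨false, 0, ∅⟩ : Move) ∈ Γ := by
  have hc : Move.comp ⟨b, t 0, D⟩ ⟨b, t 0, D⟩ ∈ Γ := hsemi.2.1 _ (htm 0) _ (htm 0)
  have hres := hjoin.1 _ hc ∅ (Set.empty_subset _) validDom_empty
  rw [mk'_empty, comp_isRefl] at hres
  simpa using hres

include hsemi hjoin hDne htm in
lemma P_diff (i j : ℕ) : Pt Γ D (t j - t i) := by
  intro E hE hED hEs
  rcases eq_or_ne E ∅ with rfl | hEne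
  · rw [mk'_empty]; exact empty_tr_mem hsemi hjoin htm
  have hDe : D ≠ ∅ := hDne.ne_empty
  cases b with
  | false =>
      have h2 : Move.inv ⟨false, t i, D⟩ ∈ Γ := hsemi.2.2 _ (htm i)
      have key := comp_restrict hsemi hjoin (htm j) h2 hE (hsub := ?_) (hsub2 := ?_)
      · rw [inv_isRefl, inv_param_of_ne hDe] at key
        simpa [sub_eq_add_neg] using key
      · exact hED
      · intro x hx
        rw [inv_dom]
        refine ⟨x + (t j - t i), hEs x hx, ?_⟩
        show uEval false (t i) _ = uEval false (t j) x
        simp [uEval]; ring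
  | true =>
      have h2 : Move.inv ⟨true, t j, D⟩ ∈ Γ := hsemi.2.2 _ (htm j)
      have key := comp_restrict hsemi hjoin (htm i) h2 hE (hsub := ?_) (hsub2 := ?_)
      · rw [inv_isRefl, inv_param_of_ne hDe] at key
        simpa using key
      · exact hED
      · intro x hx
        rw [inv_dom]
        refine ⟨x + (t j - t i), hEs x hx, ?_⟩
        show uEval true (t j) _ = uEval true (t i) x
        simp [uEval]; ring

include hsemi hjoin hDne htm in
lemma P_zero : Pt Γ D 0 := by
  have := P_diff hsemi hjoin hDne htm 0 0
  rwa [sub_self] at this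

include hsemi hjoin hDne htt htm htne in
lemma P_small {δ : ℝ} (hδ : 0 < δ) :
    ∃ ε : ℝ, 0 < ε ∧ ε < δ ∧ Pt Γ D ε ∧ Pt Γ D (-ε) := by
  obtain ⟨N, hN⟩ := Metric.tendsto_atTop.mp htt (δ/2) (by linarith)
  have hN1 : |t N - p| < δ/2 := by
    have := hN N le_rfl; rwa [Real.dist_eq] at this
  have hN2 : 0 < |t N - p| := abs_pos.mpr (sub_ne_zero.mpr (htne N))
  obtain ⟨M, hM⟩ := Metric.tendsto_atTop.mp htt _ hN2
  have hM1 : |t M - p| < |t N - p| := by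
    have := hM M le_rfl; rwa [Real.dist_eq] at this
  refine ⟨|t N - t M|, ?_, ?_, ?_, ?_⟩
  · rw [abs_pos, sub_ne_zero]
    intro h; rw [h] at hM1; exact absurd hM1 (lt_irrefl _)
  · calc |t N - t M| = |(t N - p) - (t M - p)| := by ring_nf
      _ ≤ |t N - p| + |t M - p| := abs_sub _ _
      _ < δ/2 + δ/2 := by apply add_lt_add hN1 (lt_trans hM1 hN1)
      _ = δ := by ring
  · rcases le_total (t M) (t N) with h | h
    · rw [abs_of_nonneg (by linarith)]
      exact P_diff hsemi hjoin hDne htm M N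
    · rw [abs_of_nonpos (by linarith), neg_sub]
      exact P_diff hsemi hjoin hDne htm N M
  · rcases le_total (t M) (t N) with h | h
    · rw [abs_of_nonneg (by linarith), neg_sub]
      exact P_diff hsemi hjoin hDne htm N M
    · rw [abs_of_nonpos (by linarith), neg_sub, neg_sub]
      exact P_diff hsemi hjoin hDne htm M N

include hsemi hjoin hD in
lemma P_add {s s' : ℝ} (hs : 0 ≤ s) (hs' : 0 ≤ s') (h1 : Pt Γ D s) (h2 : Pt Γ D s') :
    Pt Γ D (s + s') := by
  intro E hE hED hEs
  rcases eq_or_ne E ∅ with rfl | hEne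
  · have := h1 ∅ validDom_empty (Set.empty_subset _) (by simp)
    rw [mk'_empty] at this
    rwa [mk'_empty]
  · have hmid : ∀ x ∈ E, x + s ∈ D := fun x hx =>
      hD.2.out (hED hx) (hEs x hx) ⟨by linarith, by linarith⟩
    set E' := (fun x => x + s) '' E with hE'def
    have hE'v : Move.ValidDom E' := by
      constructor
      · exact (isOpenMap_add_right s) E hE.1
      · refine ⟨fun x hx y hy z hz => ?_⟩
        obtain ⟨a, ha, rfl⟩ := hx
        obtain ⟨c, hc, rfl⟩ := hy
        have hz1 : a + s ≤ z := hz.1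
        have hz2 : z ≤ c + s := hz.2
        exact ⟨z - s, hE.2.out ha hc ⟨by linarith, by linarith⟩, by ring⟩
    have hm1 := h1 E hE hED hmid
    have hm2 : Move.mk' false s' E' ∈ Γ := by
      refine h2 E' hE'v ?_ ?_
      · rintro x ⟨a, ha, rfl⟩; exact hmid a ha
      · rintro x ⟨a, ha, rfl⟩
        have := hEs a ha
        rwa [show a + s + s' = a + (s + s') by ring]
    have hE'ne : E' ≠ ∅ := by rw [hE'def, Ne, Set.image_eq_empty]; exact hEne
    rw [mk'_of_ne hEne] at hm1
    rw [mk'_of_ne hE'ne] at hm2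
    have key := comp_restrict hsemi hjoin hm1 hm2 hE (hsub := subset_rfl) (hsub2 := ?_)
    · simpa using key
    · intro x hx
      exact ⟨x, hx, rfl⟩

include hsemi hjoin hD in
lemma P_add_neg {s s' : ℝ} (hs : s ≤ 0) (hs' : s' ≤ 0) (h1 : Pt Γ D s) (h2 : Pt Γ D s') :
    Pt Γ D (s + s') := by
  intro E hE hED hEs
  rcases eq_or_ne E ∅ with rfl | hEne
  · have := h1 ∅ validDom_empty (Set.empty_subset _) (by simp)
    rw [mk'_empty] at this
    rwa [mk'_empty]
  · have hmid : ∀ x ∈ E, x + s ∈ D := fun x hx =>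
      hD.2.out (hEs x hx) (hED hx) ⟨by linarith, by linarith⟩
    set E' := (fun x => x + s) '' E with hE'def
    have hE'v : Move.ValidDom E' := by
      constructor
      · exact (isOpenMap_add_right s) E hE.1
      · refine ⟨fun x hx y hy z hz => ?_⟩
        obtain ⟨a, ha, rfl⟩ := hx
        obtain ⟨c, hc, rfl⟩ := hy
        have hz1 : a + s ≤ z := hz.1
        have hz2 : z ≤ c + s := hz.2
        exact ⟨z - s, hE.2.out ha hc ⟨by linarith, by linarith⟩, by ring⟩
    have hm1 := h1 E hE hED hmid
    have hm2 : Move.mk' false s' E' ∈ Γ := by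
      refine h2 E' hE'v ?_ ?_
      · rintro x ⟨a, ha, rfl⟩; exact hmid a ha
      · rintro x ⟨a, ha, rfl⟩
        have := hEs a ha
        rwa [show a + s + s' = a + (s + s') by ring]
    have hE'ne : E' ≠ ∅ := by rw [hE'def, Ne, Set.image_eq_empty]; exact hEne
    rw [mk'_of_ne hEne] at hm1
    rw [mk'_of_ne hE'ne] at hm2
    have key := comp_restrict hsemi hjoin hm1 hm2 hE (hsub := subset_rfl) (hsub2 := ?_)
    · simpa using key
    · intro x hx
      exact ⟨x, hx, rfl⟩

include hsemi hjoin hD hDne htm in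
lemma P_nsmul {s : ℝ} (h : Pt Γ D s) : ∀ k : ℕ, Pt Γ D ((k : ℝ) * s) := by
  intro k
  induction k with
  | zero => simpa using P_zero hsemi hjoin hDne htm
  | succ k ih =>
      have heq : ((k + 1 : ℕ) : ℝ) * s = (k : ℝ) * s + s := by push_cast; ring
      rw [heq]
      rcases le_total 0 s with hs | hs
      · exact P_add hsemi hjoin hD (by positivity) hs ih h
      · exact P_add_neg hsemi hjoin hD
          (mul_nonpos_of_nonneg_of_nonpos (Nat.cast_nonneg k) hs) hs ih h

end Engine
section Engine2

variable {Γ : Set Move} {D : Set ℝ} {b : Bool} {t : ℕ → ℝ} {p : ℝ}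
variable (hsemi : IsMoveSemigroup Γ) (hjoin : JoinClosed Γ)
  (hD : Move.ValidDom D) (hDne : D.Nonempty)
  (htt : Filter.Tendsto t Filter.atTop (nhds p))
  (htm : ∀ n, (⟨b, t n, D⟩ : Move) ∈ Γ)
  (htne : ∀ n, t n ≠ p)

include hsemi hjoin hD hDne htt htm htne in
lemma core (σ : ℝ) :
    ∃ s' : ℕ → ℝ, Filter.Tendsto s' Filter.atTop (nhds σ) ∧
      ∀ n, Pt Γ D (s' n) ∧ ∃ c ∈ Set.Icc (0:ℝ) 1, s' n = c * σ := by
  rcases eq_or_ne σ 0 with rfl | hσ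
  · exact ⟨fun _ => 0, tendsto_const_nhds,
      fun n => ⟨P_zero hsemi hjoin hDne htm, 0, ⟨le_refl _, zero_le_one⟩, by ring⟩⟩
  · have habs : 0 < |σ| := abs_pos.mpr hσ
    have hex : ∀ n : ℕ, ∃ ε : ℝ, 0 < ε ∧ ε < 1/(n+1) ∧ Pt Γ D ε ∧ Pt Γ D (-ε) :=
      fun n => P_small hsemi hjoin hDne htt htm htne (by positivity)
    choose ε hε0 hεlt hεP hεN using hex
    set sg : ℝ := if 0 ≤ σ then 1 else -1 with hsg
    have hsgabs : sg * |σ| = σ := by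
      rcases le_or_gt 0 σ with h | h
      · rw [hsg, if_pos h, abs_of_nonneg h, one_mul]
      · rw [hsg, if_neg (not_le.mpr h), abs_of_neg h]; ring
    have hsgone : |sg| = 1 := by
      rcases le_or_gt 0 σ with h | h
      · simp [hsg, if_pos h]
      · simp [hsg, if_neg (not_le.mpr h)]
    set k : ℕ → ℕ := fun n => ⌊|σ| / ε n⌋₊ with hk
    set s' : ℕ → ℝ := fun n => (k n : ℝ) * (sg * ε n) with hs'
    have hPs : ∀ n, Pt Γ D (sg * ε n) := by
      intro n
      rcases le_or_gt 0 σ with h | h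
      · rw [hsg, if_pos h, one_mul]; exact hεP n
      · rw [hsg, if_neg (not_le.mpr h), neg_one_mul]; exact hεN n
    have hk_le : ∀ n, (k n : ℝ) * ε n ≤ |σ| := by
      intro n
      have h1 : (k n : ℝ) ≤ |σ| / ε n := Nat.floor_le (le_of_lt (div_pos habs (hε0 n)))
      calc (k n : ℝ) * ε n ≤ (|σ| / ε n) * ε n :=
            mul_le_mul_of_nonneg_right h1 (le_of_lt (hε0 n))
        _ = |σ| := div_mul_cancel₀ _ (ne_of_gt (hε0 n))
    have hk_gt : ∀ n, |σ| - ε n < (k n : ℝ) * ε n := by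
      intro n
      have h2 : |σ| / ε n < (k n : ℝ) + 1 := Nat.lt_floor_add_one _
      have h3 : |σ| < ((k n : ℝ) + 1) * ε n := (div_lt_iff₀ (hε0 n)).mp h2
      nlinarith [hε0 n]
    refine ⟨s', ?_, fun n => ⟨?_, ?_⟩⟩
    · rw [tendsto_iff_dist_tendsto_zero]
      refine squeeze_zero (g := fun n : ℕ => 1/(n+1)) (fun n => dist_nonneg) (fun n => ?_) ?_
      · rw [Real.dist_eq]
        have h1 : s' n - σ = sg * ((k n : ℝ) * ε n - |σ|) := by
          simp only [hs']; linear_combination hsgabs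
        rw [h1, abs_mul, hsgone, one_mul, abs_of_nonpos (by linarith [hk_le n])]
        have := hk_gt n
        have := hεlt n
        linarith
      · exact tendsto_one_div_add_atTop_nhds_zero_nat
    · rw [hs']
      have := P_nsmul hsemi hjoin hD hDne htm (hPs n) (k n)
      exact this
    · refine ⟨(k n : ℝ) * ε n / |σ|,
        ⟨div_nonneg (mul_nonneg (Nat.cast_nonneg _) (hε0 n).le) (abs_nonneg _),
          (div_le_one habs).mpr (hk_le n)⟩, ?_⟩
      have hdiv : σ / |σ| = sg := by
        rw [div_eq_iff (ne_of_gt habs)]; exact hsgabs.symm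
      show (k n : ℝ) * (sg * ε n) = (k n : ℝ) * ε n / |σ| * σ
      rw [← hdiv]
      ring
end Engine2
section Engine3

variable {Γ : Set Move} {D : Set ℝ} {b : Bool} {t : ℕ → ℝ} {p : ℝ}
variable (hsemi : IsMoveSemigroup Γ) (hjoin : JoinClosed Γ)
  (hD : Move.ValidDom D) (hDne : D.Nonempty)
  (htt : Filter.Tendsto t Filter.atTop (nhds p))
  (htm : ∀ n, (⟨b, t n, D⟩ : Move) ∈ Γ)
  (htne : ∀ n, t n ≠ p)

include hjoin in
lemma glue {N : Set ℝ} (hN : Move.ValidDom N) (B : Bool) (Q : ℝ) (q : ℕ → ℝ)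
    (hq : Filter.Tendsto q Filter.atTop (nhds Q))
    (hmem : ∀ n, ∃ m ∈ Γ, m.isRefl = B ∧ m.param = q n ∧ N ⊆ m.dom) :
    Move.mk' B Q N ∈ limCl Γ := by
  apply limClosed_limCl Γ N hN (fun n => (B, q n)) B Q
    ⟨Filter.Eventually.of_forall fun _ => rfl, hq⟩
  intro n
  obtain ⟨m, hm, h1, h2, h3⟩ := hmem n
  apply subset_limCl
  have := hjoin.1 m hm N h3 hN
  rwa [h1, h2] at this

include hsemi hjoin hD hDne htt htm htne in
lemma caseT_DD {s x : ℝ} (hx : x ∈ D) (hy : x + s ∈ D) :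
    ∃ N, Move.ValidDom N ∧ x ∈ N ∧ Move.mk' false s N ∈ limCl Γ := by
  obtain ⟨s', hs't, hs'⟩ := core hsemi hjoin hD hDne htt htm htne s
  obtain ⟨η, hη, hseg⟩ := seg hD hx hy
  have hNne : (Set.Ioo (x - η) (x + η)) ≠ ∅ := by
    rw [Ne, Set.Ioo_eq_empty_iff]; push_neg; linarith
  refine ⟨Set.Ioo (x - η) (x + η), validDom_Ioo _ _, ⟨by linarith, by linarith⟩, ?_⟩
  apply glue hjoin (validDom_Ioo _ _) false s s' hs't
  intro n
  obtain ⟨hP, c, hc, hceq⟩ := hs' n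
  have hsub : Set.Ioo (x - η) (x + η) ⊆ D := fun z hz => by
    simpa using hseg z (mem_Ioo_abs hz) 0 ⟨le_refl _, zero_le_one⟩
  have hmap : ∀ z ∈ Set.Ioo (x - η) (x + η), z + s' n ∈ D := fun z hz => by
    rw [hceq]; exact hseg z (mem_Ioo_abs hz) c hc
  have hmem := hP _ (validDom_Ioo _ _) hsub hmap
  rw [mk'_of_ne hNne] at hmem
  exact ⟨_, hmem, rfl, rfl, subset_rfl⟩

end Engine3
section Engine4

variable {Γ : Set Move} {D : Set ℝ} {b : Bool} {t : ℕ → ℝ} {p : ℝ}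
variable (hsemi : IsMoveSemigroup Γ) (hjoin : JoinClosed Γ)
  (hD : Move.ValidDom D) (hDne : D.Nonempty)
  (htt : Filter.Tendsto t Filter.atTop (nhds p))
  (htm : ∀ n, (⟨b, t n, D⟩ : Move) ∈ Γ)
  (htne : ∀ n, t n ≠ p)

include hsemi hjoin hD hDne htt htm htne in
lemma caseT_DI (hb : b = false) {s x : ℝ} (hx : x ∈ D) (hy : x + s - p ∈ D) :
    ∃ N, Move.ValidDom N ∧ x ∈ N ∧ Move.mk' false s N ∈ limCl Γ := by
  subst hb
  obtain ⟨s', hs't, hs'⟩ := core hsemi hjoin hD hDne htt htm htne (s - p)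
  obtain ⟨η, hη, hseg⟩ := seg hD hx (σ := s - p) (by rw [show x + (s - p) = x + s - p by ring]; exact hy)
  have hNne : (Set.Ioo (x - η) (x + η)) ≠ ∅ := by
    rw [Ne, Set.Ioo_eq_empty_iff]; push_neg; linarith
  refine ⟨Set.Ioo (x - η) (x + η), validDom_Ioo _ _, ⟨by linarith, by linarith⟩, ?_⟩
  have hqt : Filter.Tendsto (fun n => s' n + t n) Filter.atTop (nhds s) := by
    have := hs't.add htt
    rwa [show s - p + p = s by ring] at this
  apply glue hjoin (validDom_Ioo _ _) false s _ hqt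
  intro n
  obtain ⟨hP, c, hc, hceq⟩ := hs' n
  have hsub : Set.Ioo (x - η) (x + η) ⊆ D := fun z hz => by
    simpa using hseg z (mem_Ioo_abs hz) 0 ⟨le_refl _, zero_le_one⟩
  have hmap : ∀ z ∈ Set.Ioo (x - η) (x + η), z + s' n ∈ D := fun z hz => by
    rw [hceq]; exact hseg z (mem_Ioo_abs hz) c hc
  have hm1 := hP _ (validDom_Ioo _ _) hsub hmap
  rw [mk'_of_ne hNne] at hm1
  have key := comp_restrict hsemi hjoin hm1 (htm n) (validDom_Ioo _ _)
    (hsub := subset_rfl) (hsub2 := ?_)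
  · simp only [bne_self_eq_false, Bool.bne_false] at key
    norm_num at key
    rw [mk'_of_ne hNne] at key
    exact ⟨_, key, rfl, rfl, subset_rfl⟩
  · intro z hz
    show uEval false (s' n) z ∈ D
    simp only [uEval, if_neg (by simp : ¬(false : Bool) = true)]
    exact hmap z hz

include hsemi hjoin hD hDne htt htm htne in
lemma caseR_DI (hb : b = true) {r x : ℝ} (hx : x ∈ D) (hy : x + (p - r) ∈ D) :
    ∃ N, Move.ValidDom N ∧ x ∈ N ∧ Move.mk' true r N ∈ limCl Γ := by
  subst hb
  obtain ⟨s', hs't, hs'⟩ := core hsemi hjoin hD hDne htt htm htne (p - r)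
  obtain ⟨η, hη, hseg⟩ := seg hD hx (σ := p - r) hy
  have hNne : (Set.Ioo (x - η) (x + η)) ≠ ∅ := by
    rw [Ne, Set.Ioo_eq_empty_iff]; push_neg; linarith
  refine ⟨Set.Ioo (x - η) (x + η), validDom_Ioo _ _, ⟨by linarith, by linarith⟩, ?_⟩
  have hqt : Filter.Tendsto (fun n => t n - s' n) Filter.atTop (nhds r) := by
    have := htt.sub hs't
    rwa [show p - (p - r) = r by ring] at this
  apply glue hjoin (validDom_Ioo _ _) true r _ hqt
  intro n
  obtain ⟨hP, c, hc, hceq⟩ := hs' n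
  have hsub : Set.Ioo (x - η) (x + η) ⊆ D := fun z hz => by
    simpa using hseg z (mem_Ioo_abs hz) 0 ⟨le_refl _, zero_le_one⟩
  have hmap : ∀ z ∈ Set.Ioo (x - η) (x + η), z + s' n ∈ D := fun z hz => by
    rw [hceq]; exact hseg z (mem_Ioo_abs hz) c hc
  have hm1 := hP _ (validDom_Ioo _ _) hsub hmap
  rw [mk'_of_ne hNne] at hm1
  have key := comp_restrict hsemi hjoin hm1 (htm n) (validDom_Ioo _ _)
    (hsub := subset_rfl) (hsub2 := ?_)
  · norm_num at key
    rw [mk'_of_ne hNne] at key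
    exact ⟨_, key, rfl, rfl, subset_rfl⟩
  · intro z hz
    show uEval false (s' n) z ∈ D
    simp only [uEval, if_neg (by simp : ¬(false : Bool) = true)]
    exact hmap z hz

end Engine4
section Engine5

variable {Γ : Set Move} {D : Set ℝ} {b : Bool} {t : ℕ → ℝ} {p : ℝ}
variable (hsemi : IsMoveSemigroup Γ) (hjoin : JoinClosed Γ)
  (hD : Move.ValidDom D) (hDne : D.Nonempty)
  (htt : Filter.Tendsto t Filter.atTop (nhds p))
  (htm : ∀ n, (⟨b, t n, D⟩ : Move) ∈ Γ)
  (htne : ∀ n, t n ≠ p)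

include hsemi hjoin hDne in
lemma inv_restrict_tr {τ : ℝ} (hm : (⟨false, τ, D⟩ : Move) ∈ Γ) {N : Set ℝ}
    (hN : Move.ValidDom N) (h : ∀ z ∈ N, z - τ ∈ D) (hNne : N ≠ ∅) :
    (⟨false, -τ, N⟩ : Move) ∈ Γ := by
  have hinv : Move.inv ⟨false, τ, D⟩ ∈ Γ := hsemi.2.2 _ hm
  have hsubN : N ⊆ (Move.inv (⟨false, τ, D⟩ : Move)).dom := by
    rw [inv_dom]
    intro z hz
    refine ⟨z - τ, h z hz, ?_⟩
    show uEval false τ (z - τ) = z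
    simp [uEval]
  have key := hjoin.1 _ hinv N hsubN hN
  rw [inv_isRefl, inv_param_of_ne hDne.ne_empty] at key
  norm_num at key
  rwa [mk'_of_ne hNne] at key

include hsemi hjoin hDne in
lemma inv_restrict_refl {τ : ℝ} (hm : (⟨true, τ, D⟩ : Move) ∈ Γ) {N : Set ℝ}
    (hN : Move.ValidDom N) (h : ∀ z ∈ N, τ - z ∈ D) (hNne : N ≠ ∅) :
    (⟨true, τ, N⟩ : Move) ∈ Γ := by
  have hinv : Move.inv ⟨true, τ, D⟩ ∈ Γ := hsemi.2.2 _ hm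
  have hsubN : N ⊆ (Move.inv (⟨true, τ, D⟩ : Move)).dom := by
    rw [inv_dom]
    intro z hz
    refine ⟨τ - z, h z hz, ?_⟩
    show uEval true τ (τ - z) = z
    simp [uEval]
  have key := hjoin.1 _ hinv N hsubN hN
  rw [inv_isRefl, inv_param_of_ne hDne.ne_empty] at key
  norm_num at key
  rwa [mk'_of_ne hNne] at key

include hsemi hjoin hD hDne htt htm htne in
lemma caseT_ID (hb : b = false) {s x : ℝ} (hx : x - p ∈ D) (hy : x + s ∈ D) :
    ∃ N, Move.ValidDom N ∧ x ∈ N ∧ Move.mk' false s N ∈ limCl Γ := by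
  subst hb
  obtain ⟨s', hs't, hs'⟩ := core hsemi hjoin hD hDne htt htm htne (s + p)
  obtain ⟨η, hη, hseg⟩ := seg hD hx (σ := s + p)
    (by rw [show x - p + (s + p) = x + s by ring]; exact hy)
  obtain ⟨n₀, hn₀⟩ := Metric.tendsto_atTop.mp htt (η/2) (by linarith)
  have hNne : (Set.Ioo (x - η/2) (x + η/2)) ≠ ∅ := by
    rw [Ne, Set.Ioo_eq_empty_iff]; push_neg; linarith
  have hkey : ∀ n, ∀ z ∈ Set.Ioo (x - η/2) (x + η/2), ∀ c ∈ Set.Icc (0:ℝ) 1,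
      z - t (n + n₀) + c * (s + p) ∈ D := by
    intro n z hz c hc
    apply hseg _ _ c hc
    have h2 : |t (n + n₀) - p| < η/2 := by
      have := hn₀ _ (Nat.le_add_left n₀ n); rwa [Real.dist_eq] at this
    have h3 := mem_Ioo_abs hz
    calc |z - t (n + n₀) - (x - p)| = |(z - x) + (p - t (n + n₀))| := by ring_nf
      _ ≤ |z - x| + |p - t (n + n₀)| := abs_add_le _ _
      _ < η/2 + η/2 := add_lt_add h3 (by rw [abs_sub_comm]; exact h2)
      _ = η := by ring
  refine ⟨Set.Ioo (x - η/2) (x + η/2), validDom_Ioo _ _, ⟨by linarith, by linarith⟩, ?_⟩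
  have hqt : Filter.Tendsto (fun n => -(t (n + n₀)) + s' n) Filter.atTop (nhds s) := by
    have h4 : Filter.Tendsto (fun n => t (n + n₀)) Filter.atTop (nhds p) :=
      htt.comp (tendsto_add_atTop_nat n₀)
    have := h4.neg.add hs't
    rwa [show -p + (s + p) = s by ring] at this
  apply glue hjoin (validDom_Ioo _ _) false s _ hqt
  intro n
  obtain ⟨hP, c, hc, hceq⟩ := hs' n
  have hm1 : (⟨false, -(t (n + n₀)), Set.Ioo (x - η/2) (x + η/2)⟩ : Move) ∈ Γ :=
    inv_restrict_tr hsemi hjoin hDne (htm (n + n₀)) (validDom_Ioo _ _)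
      (fun z hz => by simpa using hkey n z hz 0 ⟨le_rfl, zero_le_one⟩) hNne
  have hE2ne : (Set.Ioo (x - η/2 - t (n + n₀)) (x + η/2 - t (n + n₀))) ≠ ∅ := by
    rw [Ne, Set.Ioo_eq_empty_iff]; push_neg; linarith
  have hNmem : ∀ z ∈ Set.Ioo (x - η/2 - t (n + n₀)) (x + η/2 - t (n + n₀)),
      z + t (n + n₀) ∈ Set.Ioo (x - η/2) (x + η/2) := fun z hz =>
    ⟨by linarith [hz.1], by linarith [hz.2]⟩
  have hE2sub : Set.Ioo (x - η/2 - t (n + n₀)) (x + η/2 - t (n + n₀)) ⊆ D := fun z hz => by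
    have := hkey n (z + t (n + n₀)) (hNmem z hz) 0 ⟨le_rfl, zero_le_one⟩
    rwa [show z + t (n + n₀) - t (n + n₀) + 0 * (s + p) = z by ring] at this
  have hE2map : ∀ z ∈ Set.Ioo (x - η/2 - t (n + n₀)) (x + η/2 - t (n + n₀)),
      z + s' n ∈ D := fun z hz => by
    have := hkey n (z + t (n + n₀)) (hNmem z hz) c hc
    rw [show z + t (n + n₀) - t (n + n₀) + c * (s + p) = z + c * (s + p) by ring] at this
    rwa [← hceq] at this
  have hm2 := hP _ (validDom_Ioo _ _) hE2sub hE2map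
  rw [mk'_of_ne hE2ne] at hm2
  have key := comp_restrict hsemi hjoin hm1 hm2 (validDom_Ioo _ _)
    (hsub := subset_rfl) (hsub2 := ?_)
  · norm_num at key
    rw [mk'_of_ne hNne] at key
    exact ⟨_, key, rfl, rfl, subset_rfl⟩
  · intro z hz
    show uEval false (-(t (n + n₀))) z ∈ Set.Ioo (x - η/2 - t (n + n₀)) (x + η/2 - t (n + n₀))
    have h1 : uEval false (-(t (n + n₀))) z = z + -(t (n + n₀)) := by simp [uEval]
    rw [h1]
    exact ⟨by linarith [hz.1], by linarith [hz.2]⟩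

end Engine5
section Engine6

variable {Γ : Set Move} {D : Set ℝ} {b : Bool} {t : ℕ → ℝ} {p : ℝ}
variable (hsemi : IsMoveSemigroup Γ) (hjoin : JoinClosed Γ)
  (hD : Move.ValidDom D) (hDne : D.Nonempty)
  (htt : Filter.Tendsto t Filter.atTop (nhds p))
  (htm : ∀ n, (⟨b, t n, D⟩ : Move) ∈ Γ)
  (htne : ∀ n, t n ≠ p)

include hsemi hjoin hD hDne htt htm htne in
lemma caseT_II (hb : b = false) {s x : ℝ} (hx : x - p ∈ D) (hy : x + s - p ∈ D) :
    ∃ N, Move.ValidDom N ∧ x ∈ N ∧ Move.mk' false s N ∈ limCl Γ := by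
  subst hb
  obtain ⟨s', hs't, hs'⟩ := core hsemi hjoin hD hDne htt htm htne s
  obtain ⟨η, hη, hseg⟩ := seg hD hx (σ := s)
    (by rw [show x - p + s = x + s - p by ring]; exact hy)
  obtain ⟨n₀, hn₀⟩ := Metric.tendsto_atTop.mp htt (η/2) (by linarith)
  have hNne : (Set.Ioo (x - η/2) (x + η/2)) ≠ ∅ := by
    rw [Ne, Set.Ioo_eq_empty_iff]; push_neg; linarith
  have hkey : ∀ n, ∀ z ∈ Set.Ioo (x - η/2) (x + η/2), ∀ c ∈ Set.Icc (0:ℝ) 1,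
      z - t (n + n₀) + c * s ∈ D := by
    intro n z hz c hc
    apply hseg _ _ c hc
    have h2 : |t (n + n₀) - p| < η/2 := by
      have := hn₀ _ (Nat.le_add_left n₀ n); rwa [Real.dist_eq] at this
    have h3 := mem_Ioo_abs hz
    calc |z - t (n + n₀) - (x - p)| = |(z - x) + (p - t (n + n₀))| := by ring_nf
      _ ≤ |z - x| + |p - t (n + n₀)| := abs_add_le _ _
      _ < η/2 + η/2 := add_lt_add h3 (by rw [abs_sub_comm]; exact h2)
      _ = η := by ring
  refine ⟨Set.Ioo (x - η/2) (x + η/2), validDom_Ioo _ _, ⟨by linarith, by linarith⟩, ?_⟩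
  apply glue hjoin (validDom_Ioo _ _) false s s' hs't
  intro n
  obtain ⟨hP, c, hc, hceq⟩ := hs' n
  have hm1 : (⟨false, -(t (n + n₀)), Set.Ioo (x - η/2) (x + η/2)⟩ : Move) ∈ Γ :=
    inv_restrict_tr hsemi hjoin hDne (htm (n + n₀)) (validDom_Ioo _ _)
      (fun z hz => by simpa using hkey n z hz 0 ⟨le_rfl, zero_le_one⟩) hNne
  have hE2ne : (Set.Ioo (x - η/2 - t (n + n₀)) (x + η/2 - t (n + n₀))) ≠ ∅ := by
    rw [Ne, Set.Ioo_eq_empty_iff]; push_neg; linarith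
  have hNmem : ∀ z ∈ Set.Ioo (x - η/2 - t (n + n₀)) (x + η/2 - t (n + n₀)),
      z + t (n + n₀) ∈ Set.Ioo (x - η/2) (x + η/2) := fun z hz =>
    ⟨by linarith [hz.1], by linarith [hz.2]⟩
  have hE2sub : Set.Ioo (x - η/2 - t (n + n₀)) (x + η/2 - t (n + n₀)) ⊆ D := fun z hz => by
    have := hkey n (z + t (n + n₀)) (hNmem z hz) 0 ⟨le_rfl, zero_le_one⟩
    rwa [show z + t (n + n₀) - t (n + n₀) + 0 * s = z by ring] at this
  have hE2map : ∀ z ∈ Set.Ioo (x - η/2 - t (n + n₀)) (x + η/2 - t (n + n₀)),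
      z + s' n ∈ D := fun z hz => by
    have := hkey n (z + t (n + n₀)) (hNmem z hz) c hc
    rw [show z + t (n + n₀) - t (n + n₀) + c * s = z + c * s by ring] at this
    rwa [← hceq] at this
  have hm2 := hP _ (validDom_Ioo _ _) hE2sub hE2map
  rw [mk'_of_ne hE2ne] at hm2
  have key := comp_restrict hsemi hjoin hm1 hm2 (validDom_Ioo _ _)
    (hsub := subset_rfl) (hsub2 := ?_)
  · norm_num at key
    rw [mk'_of_ne hNne] at key
    have key2 := comp_restrict hsemi hjoin key (htm (n + n₀)) (validDom_Ioo _ _)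
      (hsub := subset_rfl) (hsub2 := ?_)
    · norm_num at key2
      rw [mk'_of_ne hNne] at key2
      exact ⟨_, key2, rfl, rfl, subset_rfl⟩
    · intro z hz
      show uEval false (-(t (n + n₀)) + s' n) z ∈ D
      have h1 : uEval false (-(t (n + n₀)) + s' n) z = z - t (n + n₀) + c * s := by
        simp [uEval]; rw [hceq]; ring
      rw [h1]
      exact hkey n z hz c hc
  · intro z hz
    show uEval false (-(t (n + n₀))) z ∈ Set.Ioo (x - η/2 - t (n + n₀)) (x + η/2 - t (n + n₀))
    have h1 : uEval false (-(t (n + n₀))) z = z + -(t (n + n₀)) := by simp [uEval]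
    rw [h1]
    exact ⟨by linarith [hz.1], by linarith [hz.2]⟩

end Engine6
section Engine7

variable {Γ : Set Move} {D : Set ℝ} {b : Bool} {t : ℕ → ℝ} {p : ℝ}
variable (hsemi : IsMoveSemigroup Γ) (hjoin : JoinClosed Γ)
  (hD : Move.ValidDom D) (hDne : D.Nonempty)
  (htt : Filter.Tendsto t Filter.atTop (nhds p))
  (htm : ∀ n, (⟨b, t n, D⟩ : Move) ∈ Γ)
  (htne : ∀ n, t n ≠ p)

include hsemi hjoin hD hDne htt htm htne in
lemma caseR_ID (hb : b = true) {r x : ℝ} (hx : p - x ∈ D) (hy : r - x ∈ D) :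
    ∃ N, Move.ValidDom N ∧ x ∈ N ∧ Move.mk' true r N ∈ limCl Γ := by
  subst hb
  obtain ⟨s', hs't, hs'⟩ := core hsemi hjoin hD hDne htt htm htne (r - p)
  obtain ⟨η, hη, hseg⟩ := seg hD hx (σ := r - p)
    (by rw [show p - x + (r - p) = r - x by ring]; exact hy)
  obtain ⟨n₀, hn₀⟩ := Metric.tendsto_atTop.mp htt (η/2) (by linarith)
  have hNne : (Set.Ioo (x - η/2) (x + η/2)) ≠ ∅ := by
    rw [Ne, Set.Ioo_eq_empty_iff]; push_neg; linarith
  have hkey : ∀ n, ∀ z ∈ Set.Ioo (x - η/2) (x + η/2), ∀ c ∈ Set.Icc (0:ℝ) 1,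
      t (n + n₀) - z + c * (r - p) ∈ D := by
    intro n z hz c hc
    apply hseg _ _ c hc
    have h2 : |t (n + n₀) - p| < η/2 := by
      have := hn₀ _ (Nat.le_add_left n₀ n); rwa [Real.dist_eq] at this
    have h3 := mem_Ioo_abs hz
    calc |t (n + n₀) - z - (p - x)| = |(x - z) + (t (n + n₀) - p)| := by ring_nf
      _ ≤ |x - z| + |t (n + n₀) - p| := abs_add_le _ _
      _ < η/2 + η/2 := add_lt_add (by rw [abs_sub_comm]; exact h3) h2
      _ = η := by ring
  refine ⟨Set.Ioo (x - η/2) (x + η/2), validDom_Ioo _ _, ⟨by linarith, by linarith⟩, ?_⟩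
  have hqt : Filter.Tendsto (fun n => t (n + n₀) + s' n) Filter.atTop (nhds r) := by
    have h4 : Filter.Tendsto (fun n => t (n + n₀)) Filter.atTop (nhds p) :=
      htt.comp (tendsto_add_atTop_nat n₀)
    have := h4.add hs't
    rwa [show p + (r - p) = r by ring] at this
  apply glue hjoin (validDom_Ioo _ _) true r _ hqt
  intro n
  obtain ⟨hP, c, hc, hceq⟩ := hs' n
  have hm1 : (⟨true, t (n + n₀), Set.Ioo (x - η/2) (x + η/2)⟩ : Move) ∈ Γ :=
    inv_restrict_refl hsemi hjoin hDne (htm (n + n₀)) (validDom_Ioo _ _)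
      (fun z hz => by simpa using hkey n z hz 0 ⟨le_rfl, zero_le_one⟩) hNne
  have hE2ne : (Set.Ioo (t (n + n₀) - x - η/2) (t (n + n₀) - x + η/2)) ≠ ∅ := by
    rw [Ne, Set.Ioo_eq_empty_iff]; push_neg; linarith
  have hNmem : ∀ z ∈ Set.Ioo (t (n + n₀) - x - η/2) (t (n + n₀) - x + η/2),
      t (n + n₀) - z ∈ Set.Ioo (x - η/2) (x + η/2) := fun z hz =>
    ⟨by linarith [hz.2], by linarith [hz.1]⟩
  have hE2sub : Set.Ioo (t (n + n₀) - x - η/2) (t (n + n₀) - x + η/2) ⊆ D := fun z hz => by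
    have := hkey n (t (n + n₀) - z) (hNmem z hz) 0 ⟨le_rfl, zero_le_one⟩
    rwa [show t (n + n₀) - (t (n + n₀) - z) + 0 * (r - p) = z by ring] at this
  have hE2map : ∀ z ∈ Set.Ioo (t (n + n₀) - x - η/2) (t (n + n₀) - x + η/2),
      z + s' n ∈ D := fun z hz => by
    have := hkey n (t (n + n₀) - z) (hNmem z hz) c hc
    rw [show t (n + n₀) - (t (n + n₀) - z) + c * (r - p) = z + c * (r - p) by ring] at this
    rwa [← hceq] at this
  have hm2 := hP _ (validDom_Ioo _ _) hE2sub hE2map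
  rw [mk'_of_ne hE2ne] at hm2
  have key := comp_restrict hsemi hjoin hm1 hm2 (validDom_Ioo _ _)
    (hsub := subset_rfl) (hsub2 := ?_)
  · norm_num at key
    rw [mk'_of_ne hNne] at key
    exact ⟨_, key, rfl, rfl, subset_rfl⟩
  · intro z hz
    show uEval true (t (n + n₀)) z ∈ Set.Ioo (t (n + n₀) - x - η/2) (t (n + n₀) - x + η/2)
    have h1 : uEval true (t (n + n₀)) z = t (n + n₀) - z := by simp [uEval]
    rw [h1]
    exact ⟨by linarith [hz.2], by linarith [hz.1]⟩

include hsemi hjoin hD hDne htt htm htne in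
lemma caseT_II_refl (hb : b = true) {s x : ℝ} (hx : p - x ∈ D) (hy : p - (x + s) ∈ D) :
    ∃ N, Move.ValidDom N ∧ x ∈ N ∧ Move.mk' false s N ∈ limCl Γ := by
  subst hb
  obtain ⟨s', hs't, hs'⟩ := core hsemi hjoin hD hDne htt htm htne (-s)
  obtain ⟨η, hη, hseg⟩ := seg hD hx (σ := -s)
    (by rw [show p - x + -s = p - (x + s) by ring]; exact hy)
  obtain ⟨n₀, hn₀⟩ := Metric.tendsto_atTop.mp htt (η/2) (by linarith)
  have hNne : (Set.Ioo (x - η/2) (x + η/2)) ≠ ∅ := by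
    rw [Ne, Set.Ioo_eq_empty_iff]; push_neg; linarith
  have hkey : ∀ n, ∀ z ∈ Set.Ioo (x - η/2) (x + η/2), ∀ c ∈ Set.Icc (0:ℝ) 1,
      t (n + n₀) - z + c * (-s) ∈ D := by
    intro n z hz c hc
    apply hseg _ _ c hc
    have h2 : |t (n + n₀) - p| < η/2 := by
      have := hn₀ _ (Nat.le_add_left n₀ n); rwa [Real.dist_eq] at this
    have h3 := mem_Ioo_abs hz
    calc |t (n + n₀) - z - (p - x)| = |(x - z) + (t (n + n₀) - p)| := by ring_nf
      _ ≤ |x - z| + |t (n + n₀) - p| := abs_add_le _ _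
      _ < η/2 + η/2 := add_lt_add (by rw [abs_sub_comm]; exact h3) h2
      _ = η := by ring
  refine ⟨Set.Ioo (x - η/2) (x + η/2), validDom_Ioo _ _, ⟨by linarith, by linarith⟩, ?_⟩
  have hqt : Filter.Tendsto (fun n => -s' n) Filter.atTop (nhds s) := by
    have := hs't.neg
    rwa [neg_neg] at this
  apply glue hjoin (validDom_Ioo _ _) false s _ hqt
  intro n
  obtain ⟨hP, c, hc, hceq⟩ := hs' n
  have hm1 : (⟨true, t (n + n₀), Set.Ioo (x - η/2) (x + η/2)⟩ : Move) ∈ Γ :=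
    inv_restrict_refl hsemi hjoin hDne (htm (n + n₀)) (validDom_Ioo _ _)
      (fun z hz => by simpa using hkey n z hz 0 ⟨le_rfl, zero_le_one⟩) hNne
  have hE2ne : (Set.Ioo (t (n + n₀) - x - η/2) (t (n + n₀) - x + η/2)) ≠ ∅ := by
    rw [Ne, Set.Ioo_eq_empty_iff]; push_neg; linarith
  have hNmem : ∀ z ∈ Set.Ioo (t (n + n₀) - x - η/2) (t (n + n₀) - x + η/2),
      t (n + n₀) - z ∈ Set.Ioo (x - η/2) (x + η/2) := fun z hz =>
    ⟨by linarith [hz.2], by linarith [hz.1]⟩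
  have hE2sub : Set.Ioo (t (n + n₀) - x - η/2) (t (n + n₀) - x + η/2) ⊆ D := fun z hz => by
    have := hkey n (t (n + n₀) - z) (hNmem z hz) 0 ⟨le_rfl, zero_le_one⟩
    rwa [show t (n + n₀) - (t (n + n₀) - z) + 0 * (-s) = z by ring] at this
  have hE2map : ∀ z ∈ Set.Ioo (t (n + n₀) - x - η/2) (t (n + n₀) - x + η/2),
      z + s' n ∈ D := fun z hz => by
    have := hkey n (t (n + n₀) - z) (hNmem z hz) c hc
    rw [show t (n + n₀) - (t (n + n₀) - z) + c * (-s) = z + c * (-s) by ring] at this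
    rwa [← hceq] at this
  have hm2 := hP _ (validDom_Ioo _ _) hE2sub hE2map
  rw [mk'_of_ne hE2ne] at hm2
  have key := comp_restrict hsemi hjoin hm1 hm2 (validDom_Ioo _ _)
    (hsub := subset_rfl) (hsub2 := ?_)
  · norm_num at key
    rw [mk'_of_ne hNne] at key
    have key2 := comp_restrict hsemi hjoin key (htm (n + n₀)) (validDom_Ioo _ _)
      (hsub := subset_rfl) (hsub2 := ?_)
    · norm_num at key2
      rw [mk'_of_ne hNne] at key2
      exact ⟨_, key2, rfl, rfl, subset_rfl⟩
    · intro z hz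
      show uEval true (t (n + n₀) + s' n) z ∈ D
      have h1 : uEval true (t (n + n₀) + s' n) z = t (n + n₀) - z + c * (-s) := by
        simp [uEval]; rw [hceq]; ring
      rw [h1]
      exact hkey n z hz c hc
  · intro z hz
    show uEval true (t (n + n₀)) z ∈ Set.Ioo (t (n + n₀) - x - η/2) (t (n + n₀) - x + η/2)
    have h1 : uEval true (t (n + n₀)) z = t (n + n₀) - z := by simp [uEval]
    rw [h1]
    exact ⟨by linarith [hz.2], by linarith [hz.1]⟩

end Engine7
lemma assemble {Γ : Set Move} (B : Bool) (Q : ℝ) (E : Set ℝ)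
    (hE : Move.ValidDom E) (hEne : E.Nonempty)
    (h : ∀ x ∈ E, ∃ N, Move.ValidDom N ∧ x ∈ N ∧ Move.mk' B Q N ∈ limCl Γ) :
    Move.mk' B Q E ∈ joinCl (limCl Γ) := by
  have hΩ := joinClosed_joinCl (limCl Γ)
  have hsub := subset_joinCl (limCl Γ)
  -- pointwise shrunk neighborhoods
  have h' : ∀ x ∈ E, ∃ N, Move.ValidDom N ∧ x ∈ N ∧ N ⊆ E ∧
      Move.mk' B Q N ∈ joinCl (limCl Γ) := by
    intro x hx
    obtain ⟨N, hN, hxN, hmem⟩ := h x hx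
    have hNne : N ≠ ∅ := fun hh => by rw [hh] at hxN; exact hxN
    have hres := hΩ.1 _ (hsub hmem) (N ∩ E) Set.inter_subset_left (validDom_inter hN hE)
    rw [mk'_of_ne hNne] at hres
    exact ⟨N ∩ E, validDom_inter hN hE, ⟨hxN, hx⟩, Set.inter_subset_right, hres⟩
  set J := {M : Set ℝ | Move.ValidDom M ∧ M ⊆ E ∧ Move.mk' B Q M ∈ joinCl (limCl Γ)} with hJ
  have hUnion : ⋃₀ J = E := by
    apply Set.Subset.antisymm
    · intro x hx
      obtain ⟨M, hM, hxM⟩ := hx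
      exact hM.2.1 hxM
    · intro x hx
      obtain ⟨N, h1, h2, h3, h4⟩ := h' x hx
      exact ⟨N, ⟨h1, h3, h4⟩, h2⟩
  have hJne : J.Nonempty := by
    obtain ⟨x, hx⟩ := hEne
    obtain ⟨N, h1, h2, h3, h4⟩ := h' x hx
    exact ⟨N, h1, h3, h4⟩
  have := hΩ.2 B Q J hJne (fun I hI => hI.2.2) (by rw [hUnion]; exact hE.2)
  rwa [hUnion] at this
/-- Limits imply components. -/
theorem limits_imply_components (Γ : Set Move)
    (hsemi : IsMoveSemigroup Γ) (hjoin : JoinClosed Γ)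
    (D : Set ℝ) (hD : Move.ValidDom D)
    (γ : ℕ → Bool × ℝ) (b : Bool) (p : ℝ) (hconv : ConvergesTo γ b p)
    (hmem : ∀ i, Move.mk' (γ i).1 (γ i).2 D ∈ Γ)
    (hne : ∀ i, γ i ≠ (b, p))
    (I : Set ℝ) (hI : I = uEval b p '' D) :
    (b = false → tMoves ((D ∪ I) ×ˢ (D ∪ I)) ⊆ joinCl (limCl Γ)) ∧
    (b = true →
      rMoves ((D ×ˢ I) ∪ (I ×ˢ D)) ⊆ joinCl (limCl Γ) ∧
      tMoves ((D ×ˢ D) ∪ (I ×ˢ I)) ⊆ joinCl (limCl Γ)) := by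
  classical
  obtain ⟨n₁, hn₁⟩ := Filter.eventually_atTop.mp hconv.1
  set t : ℕ → ℝ := fun n => (γ (n + n₁)).2 with ht
  have hchar : ∀ n : ℕ, (γ (n + n₁)).1 = b := fun n => hn₁ _ (Nat.le_add_left _ _)
  have htt : Filter.Tendsto t Filter.atTop (nhds p) :=
    hconv.2.comp (tendsto_add_atTop_nat n₁)
  have htne : ∀ n, t n ≠ p := fun n h => hne (n + n₁) (Prod.ext (hchar n) h)
  have htm0 : ∀ n, Move.mk' b (t n) D ∈ Γ := fun n => by
    have := hmem (n + n₁)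
    rwa [hchar n] at this
  have hsubΩ : Γ ⊆ joinCl (limCl Γ) := (subset_limCl Γ).trans (subset_joinCl _)
  have hemp_b : (⟨b, 0, ∅⟩ : Move) ∈ Γ := by
    have := hjoin.1 _ (htm0 0) ∅ (Set.empty_subset _) validDom_empty
    rwa [mk'_empty, mk'_isRefl] at this
  have hemp_f : (⟨false, 0, ∅⟩ : Move) ∈ Γ := by
    have hc : Move.comp (Move.mk' b (t 0) D) (Move.mk' b (t 0) D) ∈ Γ :=
      hsemi.2.1 _ (htm0 0) _ (htm0 0)
    have := hjoin.1 _ hc ∅ (Set.empty_subset _) validDom_empty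
    rwa [mk'_empty, comp_isRefl, mk'_isRefl, bne_self_eq_false] at this
  have hstruct : ∀ m : Move, m.Valid → m.dom = ∅ → m = ⟨m.isRefl, 0, ∅⟩ := by
    intro m hv hd
    have hp := hv.2 hd
    calc m = ⟨m.isRefl, m.param, m.dom⟩ := rfl
      _ = ⟨m.isRefl, 0, ∅⟩ := by rw [hp, hd]
  have hevalT : ∀ m : Move, m.isRefl = false → ∀ x, m.eval x = x + m.param := by
    intro m hm x
    rw [Move.eval, hm]
    simp [uEval]
  have hevalR : ∀ m : Move, m.isRefl = true → ∀ x, m.eval x = m.param - x := by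
    intro m hm x
    rw [Move.eval, hm]
    simp [uEval]
  constructor
  · rintro rfl
    intro m hm
    obtain ⟨h1, h2, h3⟩ := hm
    rcases eq_or_ne m.dom ∅ with hde | hdne
    · rw [hstruct m h2 hde, h1]
      exact hsubΩ hemp_f
    · have hDne' : D.Nonempty := by
        obtain ⟨x, hx⟩ := Set.nonempty_iff_ne_empty.mpr hdne
        have hgr := h3 ⟨x, hx, rfl⟩
        rcases (Set.mem_prod.mp hgr).1 with h | h
        · exact ⟨x, h⟩
        · rw [hI] at h; obtain ⟨d, hd, _⟩ := h; exact ⟨d, hd⟩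
      have htm : ∀ n, (⟨false, t n, D⟩ : Move) ∈ Γ := fun n => by
        have := htm0 n
        rwa [mk'_of_ne hDne'.ne_empty] at this
      have hItr : ∀ y, y ∈ I → y - p ∈ D := by
        intro y hy
        rw [hI] at hy
        obtain ⟨d, hd, rfl⟩ := hy
        have h5 : uEval false p d = d + p := by simp [uEval]
        rw [h5]
        simpa using hd
      have hmeq : m = Move.mk' false m.param m.dom := by
        conv_lhs => rw [← valid_mk'_eq h2]
        rw [h1]
      rw [hmeq]
      apply assemble false m.param m.dom h2.1 (Set.nonempty_iff_ne_empty.mpr hdne)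
      intro x hx
      have hgr : (x, m.eval x) ∈ (D ∪ I) ×ˢ (D ∪ I) := h3 ⟨x, hx, rfl⟩
      rw [hevalT m h1 x] at hgr
      rcases (Set.mem_prod.mp hgr).1 with hxD | hxI <;>
        rcases (Set.mem_prod.mp hgr).2 with hyD | hyI
      · exact caseT_DD hsemi hjoin hD hDne' htt htm htne hxD hyD
      · exact caseT_DI hsemi hjoin hD hDne' htt htm htne rfl hxD (hItr _ hyI)
      · exact caseT_ID hsemi hjoin hD hDne' htt htm htne rfl (hItr _ hxI) hyD
      · exact caseT_II hsemi hjoin hD hDne' htt htm htne rfl (hItr _ hxI) (hItr _ hyI)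
  · rintro rfl
    have hItr : ∀ y, y ∈ I → p - y ∈ D := by
      intro y hy
      rw [hI] at hy
      obtain ⟨d, hd, rfl⟩ := hy
      have h5 : uEval true p d = p - d := by simp [uEval]
      rw [h5]
      simpa using hd
    constructor
    · intro m hm
      obtain ⟨h1, h2, h3⟩ := hm
      rcases eq_or_ne m.dom ∅ with hde | hdne
      · rw [hstruct m h2 hde, h1]
        exact hsubΩ hemp_b
      · have hDne' : D.Nonempty := by
          obtain ⟨x, hx⟩ := Set.nonempty_iff_ne_empty.mpr hdne
          have hgr := h3 ⟨x, hx, rfl⟩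
          rcases hgr with h | h
          · exact ⟨x, (Set.mem_prod.mp h).1⟩
          · have := (Set.mem_prod.mp h).1
            rw [hI] at this; obtain ⟨d, hd, _⟩ := this; exact ⟨d, hd⟩
        have htm : ∀ n, (⟨true, t n, D⟩ : Move) ∈ Γ := fun n => by
          have := htm0 n
          rwa [mk'_of_ne hDne'.ne_empty] at this
        have hmeq : m = Move.mk' true m.param m.dom := by
          conv_lhs => rw [← valid_mk'_eq h2]
          rw [h1]
        rw [hmeq]
        apply assemble true m.param m.dom h2.1 (Set.nonempty_iff_ne_empty.mpr hdne)
        intro x hx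
        have hgr : (x, m.eval x) ∈ D ×ˢ I ∪ I ×ˢ D := h3 ⟨x, hx, rfl⟩
        rw [hevalR m h1 x] at hgr
        rcases hgr with hDI | hID
        · have hxD := (Set.mem_prod.mp hDI).1
          have hyI := hItr _ (Set.mem_prod.mp hDI).2
          apply caseR_DI hsemi hjoin hD hDne' htt htm htne rfl hxD
          rw [show x + (p - m.param) = p - (m.param - x) by ring]
          exact hyI
        · have hxI := hItr _ (Set.mem_prod.mp hID).1
          have hyD := (Set.mem_prod.mp hID).2
          exact caseR_ID hsemi hjoin hD hDne' htt htm htne rfl hxI hyD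
    · intro m hm
      obtain ⟨h1, h2, h3⟩ := hm
      rcases eq_or_ne m.dom ∅ with hde | hdne
      · rw [hstruct m h2 hde, h1]
        exact hsubΩ hemp_f
      · have hDne' : D.Nonempty := by
          obtain ⟨x, hx⟩ := Set.nonempty_iff_ne_empty.mpr hdne
          have hgr := h3 ⟨x, hx, rfl⟩
          rcases hgr with h | h
          · exact ⟨x, (Set.mem_prod.mp h).1⟩
          · have := (Set.mem_prod.mp h).1
            rw [hI] at this; obtain ⟨d, hd, _⟩ := this; exact ⟨d, hd⟩
        have htm : ∀ n, (⟨true, t n, D⟩ : Move) ∈ Γ := fun n => by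
          have := htm0 n
          rwa [mk'_of_ne hDne'.ne_empty] at this
        have hmeq : m = Move.mk' false m.param m.dom := by
          conv_lhs => rw [← valid_mk'_eq h2]
          rw [h1]
        rw [hmeq]
        apply assemble false m.param m.dom h2.1 (Set.nonempty_iff_ne_empty.mpr hdne)
        intro x hx
        have hgr : (x, m.eval x) ∈ D ×ˢ D ∪ I ×ˢ I := h3 ⟨x, hx, rfl⟩
        rw [hevalT m h1 x] at hgr
        rcases hgr with hDD | hII
        · exact caseT_DD hsemi hjoin hD hDne' htt htm htne
            (Set.mem_prod.mp hDD).1 (Set.mem_prod.mp hDD).2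
        · have hxI := hItr _ (Set.mem_prod.mp hII).1
          have hyI := hItr _ (Set.mem_prod.mp hII).2
          exact caseT_II_refl hsemi hjoin hD hDne' htt htm htne rfl hxI hyI
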